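/- For the majority function MAJ_3 on 3 bits and p ∈ [0,1], the distributional sensitivity is 2 − 2p³ − 2(1−p)³, the distributional block sensitivity is 2 − p³ − (1−p)³, the distributional witness complexity is 2, and the distributional subcube partition and algorithmic complexities both equal 2 + 2p(1−p). -/

import Mathlib

open Classical

noncomputable section

/-- Flip the bits of `x` in the set `B`. -/
def flipOn {ι : Type*} [DecidableEq ι] (x : ι → Bool) (B : Finset ι) : ι → Bool :=
  fun i => if i ∈ B then !(x i) else x i

/-- Pointwise sensitivity of `f` at `x`. -/
def sensAt {ι : Type*} [Fintype ι] [DecidableEq ι] (f : (ι → Bool) → Bool)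
    (x : ι → Bool) : ℕ :=
  (Finset.univ.filter fun i => f (flipOn x {i}) ≠ f x).card

/-- Pointwise block sensitivity of `f` at `x`. -/
def bsAt {ι : Type*} [DecidableEq ι] (f : (ι → Bool) → Bool) (x : ι → Bool) : ℕ :=
  sSup {m | ∃ B : Fin m → Finset ι,
    (∀ j, f (flipOn x (B j)) ≠ f x) ∧ ∀ j k, j ≠ k → Disjoint (B j) (B k)}

/-- `W` is a witness set for `f` at `x`. -/
def IsWitness {ι : Type*} (f : (ι → Bool) → Bool) (x : ι → Bool) (W : Finset ι) : Prop :=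
  ∀ y, (∀ i ∈ W, y i = x i) → f y = f x

/-- Pointwise minimum witness size of `f` at `x`. -/
def witAt {ι : Type*} (f : (ι → Bool) → Bool) (x : ι → Bool) : ℕ :=
  sInf {k | ∃ W : Finset ι, W.card = k ∧ IsWitness f x W}

/-- Decision trees querying coordinates in `ι`. -/
inductive DTree (ι : Type*) where
  | leaf : DTree ι
  | node : ι → DTree ι → DTree ι → DTree ι

/-- The set of coordinates queried by the tree `T` on input `x`. -/
def DTree.path {ι : Type*} [DecidableEq ι] : DTree ι → (ι → Bool) → Finset ι
  | .leaf, _ => ∅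
  | .node i t0 t1, x => insert i (if x i then t1.path x else t0.path x)

/-- The tree `T` determines `f`: at each leaf the queried bits witness the value of `f`. -/
def DTree.Determines {ι : Type*} [DecidableEq ι] (T : DTree ι)
    (f : (ι → Bool) → Bool) : Prop :=
  ∀ x, IsWitness f x (T.path x)

/-- A partition of the hypercube into subcubes, encoded by the map sending each point to
the code (fixed coordinates) of its part. -/
structure SubcubePartition (ι : Type*) where
  code : (ι → Bool) → (ι → Option Bool)
  self_mem : ∀ x i b, code x i = some b → x i = b
  compat : ∀ x y, (∀ i b, code x i = some b → y i = b) → code y = code x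

/-- Number of coordinates fixed by the subcube containing `x`. -/
def SubcubePartition.codim {ι : Type*} [Fintype ι] (P : SubcubePartition ι)
    (x : ι → Bool) : ℕ :=
  (Finset.univ.filter fun i => (P.code x i).isSome).card

/-- The partition determines `f`, i.e. `f` is constant on each part. -/
def SubcubePartition.Determines {ι : Type*} (P : SubcubePartition ι)
    (f : (ι → Bool) → Bool) : Prop :=
  ∀ x y, (∀ i b, P.code x i = some b → y i = b) → f y = f x

/-- Deterministic sensitivity. -/
def detSens {ι : Type*} [Fintype ι] [DecidableEq ι] (f : (ι → Bool) → Bool) : ℕ :=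
  Finset.univ.sup fun x => sensAt f x

/-- Deterministic block sensitivity. -/
def detBS {ι : Type*} [Fintype ι] [DecidableEq ι] (f : (ι → Bool) → Bool) : ℕ :=
  Finset.univ.sup fun x => bsAt f x

/-- Deterministic witness complexity. -/
def detWit {ι : Type*} [Fintype ι] [DecidableEq ι] (f : (ι → Bool) → Bool) : ℕ :=
  Finset.univ.sup fun x => witAt f x

/-- Deterministic subcube partition complexity. -/
def detSC {ι : Type*} [Fintype ι] (f : (ι → Bool) → Bool) : ℕ :=
  sInf {k | ∃ P : SubcubePartition ι, P.Determines f ∧ ∀ x, P.codim x ≤ k}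

/-- Deterministic algorithmic (decision tree) complexity. -/
def detAlg {ι : Type*} [Fintype ι] [DecidableEq ι] (f : (ι → Bool) → Bool) : ℕ :=
  sInf {k | ∃ T : DTree ι, T.Determines f ∧ ∀ x, (T.path x).card ≤ k}

/-- Weight of the configuration `x` under the product Bernoulli(p) measure `π_p`. -/
def wt {ι : Type*} [Fintype ι] (p : ℝ) (x : ι → Bool) : ℝ :=
  ∏ i, (if x i then p else 1 - p)

/-- Expectation under `π_p`. -/
def expec {ι : Type*} [Fintype ι] [DecidableEq ι] (p : ℝ) (g : (ι → Bool) → ℝ) : ℝ :=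
  ∑ x, wt p x * g x

/-- Distributional sensitivity. -/
def distSens {ι : Type*} [Fintype ι] [DecidableEq ι] (f : (ι → Bool) → Bool) (p : ℝ) : ℝ :=
  expec p fun x => (sensAt f x : ℝ)

/-- Distributional block sensitivity. -/
def distBS {ι : Type*} [Fintype ι] [DecidableEq ι] (f : (ι → Bool) → Bool) (p : ℝ) : ℝ :=
  expec p fun x => (bsAt f x : ℝ)

/-- Distributional witness complexity. -/
def distWit {ι : Type*} [Fintype ι] [DecidableEq ι] (f : (ι → Bool) → Bool) (p : ℝ) : ℝ :=
  expec p fun x => (witAt f x : ℝ)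

/-- Distributional subcube partition complexity. -/
def distSC {ι : Type*} [Fintype ι] [DecidableEq ι] (f : (ι → Bool) → Bool) (p : ℝ) : ℝ :=
  sInf {c | ∃ P : SubcubePartition ι, P.Determines f ∧
    c = expec p fun x => (P.codim x : ℝ)}

/-- Distributional algorithmic complexity. -/
def distAlg {ι : Type*} [Fintype ι] [DecidableEq ι] (f : (ι → Bool) → Bool) (p : ℝ) : ℝ :=
  sInf {c | ∃ T : DTree ι, T.Determines f ∧
    c = expec p fun x => ((T.path x).card : ℝ)}

/-- `μ x J` is the joint probability that the bits equal `x` and the random set equals `J`;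
the conditions say: the marginal of the bits is `π_p`, the random set is a.s. a witness set
for `f`, and the random set is local (conditionally on `{I = J}` and the bits on `J`, the
bits outside `J` are still i.i.d. Bernoulli(p)). -/
def IsLocalWitnessSystem {ι : Type*} [Fintype ι] [DecidableEq ι]
    (f : (ι → Bool) → Bool) (p : ℝ) (μ : (ι → Bool) → Finset ι → ℝ) : Prop :=
  (∀ x J, 0 ≤ μ x J) ∧
  (∀ x, ∑ J, μ x J = wt p x) ∧
  (∀ x J, μ x J ≠ 0 → IsWitness f x J) ∧
  (∀ (J : Finset ι) x y, (∀ i ∈ J, x i = y i) → μ x J * wt p y = μ y J * wt p x)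

/-- Distributional local witness complexity. -/
def distLocal {ι : Type*} [Fintype ι] [DecidableEq ι]
    (f : (ι → Bool) → Bool) (p : ℝ) : ℝ :=
  sInf {c | ∃ μ : (ι → Bool) → Finset ι → ℝ, IsLocalWitnessSystem f p μ ∧
    c = ∑ x, ∑ J, μ x J * (J.card : ℝ)}

/-- The majority function on 3 bits. -/
def MAJ3 : (Fin 3 → Bool) → Bool := fun x => (x 0 && x 1) || (x 0 && x 2) || (x 1 && x 2)

lemma wit_exists : ∀ x : Fin 3 → Bool,
    ∃ W : Finset (Fin 3), W.card = 2 ∧ IsWitness MAJ3 x W := by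
  unfold IsWitness; decide

lemma wit_lb : ∀ (x : Fin 3 → Bool) (W : Finset (Fin 3)),
    IsWitness MAJ3 x W → 2 ≤ W.card := by
  unfold IsWitness; decide


set_option maxRecDepth 4000
lemma bs_mem_zero (f : (Fin 3 → Bool) → Bool) (x : Fin 3 → Bool) :
    (0 : ℕ) ∈ {m | ∃ B : Fin m → Finset (Fin 3),
      (∀ j, f (flipOn x (B j)) ≠ f x) ∧ ∀ j k, j ≠ k → Disjoint (B j) (B k)} :=
  ⟨Fin.elim0, fun j => j.elim0, fun j _ _ => j.elim0⟩

lemma bs_bdd (f : (Fin 3 → Bool) → Bool) (x : Fin 3 → Bool) :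
    ∀ m ∈ {m | ∃ B : Fin m → Finset (Fin 3),
      (∀ j, f (flipOn x (B j)) ≠ f x) ∧ ∀ j k, j ≠ k → Disjoint (B j) (B k)}, m ≤ 3 := by
  rintro m ⟨B, hB, hD⟩
  have hne : ∀ j, 1 ≤ (B j).card := by
    intro j
    rcases Finset.eq_empty_or_nonempty (B j) with h | h
    · exfalso
      apply hB j
      have : flipOn x (B j) = x := by
        funext i; simp [flipOn, h]
      rw [this]
    · exact Finset.card_pos.mpr h
  have : m = ∑ j : Fin m, 1 := by simp
  rw [this]
  calc ∑ j : Fin m, 1 ≤ ∑ j : Fin m, (B j).card := Finset.sum_le_sum fun j _ => hne j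
    _ = (Finset.univ.biUnion B).card := (Finset.card_biUnion (fun j _ k _ h => hD j k h)).symm
    _ ≤ (Finset.univ : Finset (Fin 3)).card := Finset.card_le_univ _
    _ = 3 := by simp

lemma bsAt_le_of (f : (Fin 3 → Bool) → Bool) (x : Fin 3 → Bool) (n : ℕ)
    (h : ∀ B : Fin (n+1) → Finset (Fin 3),
      ¬((∀ j, f (flipOn x (B j)) ≠ f x) ∧ ∀ j k, j ≠ k → Disjoint (B j) (B k))) :
    bsAt f x ≤ n := by
  apply csSup_le ⟨0, bs_mem_zero f x⟩
  rintro m ⟨B, hB, hD⟩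
  by_contra hlt
  push_neg at hlt
  exact h (fun j => B (Fin.castLE hlt j))
    ⟨fun j => hB _, fun j k hjk => hD _ _ fun he => hjk (Fin.castLE_injective _ he)⟩

lemma le_bsAt_of (f : (Fin 3 → Bool) → Bool) (x : Fin 3 → Bool) (n : ℕ)
    (B : Fin n → Finset (Fin 3)) (h1 : ∀ j, f (flipOn x (B j)) ≠ f x)
    (h2 : ∀ j k, j ≠ k → Disjoint (B j) (B k)) : n ≤ bsAt f x :=
  le_csSup ⟨3, bs_bdd f x⟩ ⟨B, h1, h2⟩

lemma bs_ub : ∀ (x : Fin 3 → Bool) (B : Fin 3 → Finset (Fin 3)),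
    ¬((∀ j, MAJ3 (flipOn x (B j)) ≠ MAJ3 x) ∧ ∀ j k, j ≠ k → Disjoint (B j) (B k)) := by
  decide

lemma bs_ub1 : ∀ (x : Fin 3 → Bool), (x 0 = x 1 ∧ x 1 = x 2) →
    ∀ (B : Fin 2 → Finset (Fin 3)),
    ¬((∀ j, MAJ3 (flipOn x (B j)) ≠ MAJ3 x) ∧ ∀ j k, j ≠ k → Disjoint (B j) (B k)) := by
  decide

lemma bs_lb1 : ∀ (x : Fin 3 → Bool), MAJ3 (flipOn x Finset.univ) ≠ MAJ3 x := by decide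

lemma bs_lb2 : ∀ (x : Fin 3 → Bool), ¬(x 0 = x 1 ∧ x 1 = x 2) →
    ∃ B : Fin 2 → Finset (Fin 3),
      (∀ j, MAJ3 (flipOn x (B j)) ≠ MAJ3 x) ∧ ∀ j k, j ≠ k → Disjoint (B j) (B k) := by
  decide

lemma bs_val (x : Fin 3 → Bool) :
    bsAt MAJ3 x = if x 0 = x 1 ∧ x 1 = x 2 then 1 else 2 := by
  split_ifs with h
  · refine le_antisymm (bsAt_le_of _ _ _ (bs_ub1 x h)) ?_
    exact le_bsAt_of _ _ 1 ![Finset.univ] (fun j => by fin_cases j <;> exact bs_lb1 x)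
      (fun j k hjk => by fin_cases j <;> fin_cases k <;> simp_all)
  · obtain ⟨B, h1, h2⟩ := bs_lb2 x h
    exact le_antisymm (bsAt_le_of _ _ _ (bs_ub x)) (le_bsAt_of _ _ 2 B h1 h2)


def e3 : (Bool × Bool × Bool) ≃ (Fin 3 → Bool) where
  toFun := fun b => ![b.1, b.2.1, b.2.2]
  invFun := fun x => (x 0, x 1, x 2)
  left_inv := by decide
  right_inv := by decide

lemma sum_bool3 (F : (Fin 3 → Bool) → ℝ) :
    ∑ x, F x = F ![false,false,false] + F ![false,false,true] + F ![false,true,false]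
      + F ![false,true,true] + F ![true,false,false] + F ![true,false,true]
      + F ![true,true,false] + F ![true,true,true] := by
  rw [← Fintype.sum_equiv e3 (fun b => F (e3 b)) F (fun _ => rfl)]
  simp only [Fintype.sum_prod_type, Fintype.sum_bool, e3, Equiv.coe_fn_mk]
  ring

lemma wt_eval (p : ℝ) (a b c : Bool) :
    wt p ![a,b,c] = (if a then p else 1-p) * ((if b then p else 1-p) * (if c then p else 1-p)) := by
  cases a <;> cases b <;> cases c <;> simp [wt, Fin.prod_univ_three, mul_assoc]

lemma sens_val : ∀ x : Fin 3 → Bool,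
    sensAt MAJ3 x = if x 0 = x 1 ∧ x 1 = x 2 then 0 else 2 := by decide

example (p : ℝ) : distSens MAJ3 p = 2 - 2 * p ^ 3 - 2 * (1 - p) ^ 3 := by
  unfold distSens expec
  rw [sum_bool3]
  simp only [sens_val, wt_eval]
  norm_num [Matrix.cons_val_two]
  ring


def fixSet (P : SubcubePartition (Fin 3)) (x : Fin 3 → Bool) : Finset (Fin 3) :=
  Finset.univ.filter fun i => (P.code x i).isSome

lemma codim_eq_fix (P : SubcubePartition (Fin 3)) (x : Fin 3 → Bool) :
    P.codim x = (fixSet P x).card := rfl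

lemma code_eq_some (P : SubcubePartition (Fin 3)) (x : Fin 3 → Bool) (i : Fin 3)
    (hi : i ∈ fixSet P x) : P.code x i = some (x i) := by
  obtain ⟨b, hb⟩ := Option.isSome_iff_exists.mp (Finset.mem_filter.mp hi).2
  rw [hb, P.self_mem x i b hb]

lemma fix_witness (P : SubcubePartition (Fin 3)) (hdet : P.Determines MAJ3)
    (x : Fin 3 → Bool) : IsWitness MAJ3 x (fixSet P x) := by
  intro y hy
  apply hdet x y
  intro i b hib
  have hi : i ∈ fixSet P x := Finset.mem_filter.mpr ⟨Finset.mem_univ i, by rw [hib]; rfl⟩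
  rw [hy i hi]
  exact P.self_mem x i b hib

lemma codim_ge (P : SubcubePartition (Fin 3)) (hdet : P.Determines MAJ3)
    (x : Fin 3 → Bool) : 2 ≤ P.codim x :=
  wit_lb x _ (fix_witness P hdet x)

lemma codim_le (P : SubcubePartition (Fin 3)) (x : Fin 3 → Bool) : P.codim x ≤ 3 := by
  rw [codim_eq_fix]
  calc (fixSet P x).card ≤ (Finset.univ : Finset (Fin 3)).card := Finset.card_le_univ _
    _ = 3 := by simp

lemma pair_contra (P : SubcubePartition (Fin 3)) (hdet : P.Determines MAJ3)
    (x y z : Fin 3 → Bool) (Wx Wy : Finset (Fin 3)) (i : Fin 3)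
    (hwx : ∀ W, IsWitness MAJ3 x W → W.card ≤ 2 → W = Wx)
    (hwy : ∀ W, IsWitness MAJ3 y W → W.card ≤ 2 → W = Wy)
    (hzx : ∀ j ∈ Wx, z j = x j) (hzy : ∀ j ∈ Wy, z j = y j)
    (hi : i ∈ Wx) (hxy : x i ≠ y i)
    (hcx : P.codim x ≤ 2) (hcy : P.codim y ≤ 2) : False := by
  have ex : fixSet P x = Wx := hwx _ (fix_witness P hdet x) hcx
  have ey : fixSet P y = Wy := hwy _ (fix_witness P hdet y) hcy
  have hzc : ∀ (w : Fin 3 → Bool), fixSet P w = Wx ∨ fixSet P w = Wy →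
      (∀ j ∈ fixSet P w, z j = w j) → P.code z = P.code w := by
    intro w _ hzw
    apply P.compat w z
    intro j b hb
    have hj : j ∈ fixSet P w := Finset.mem_filter.mpr ⟨Finset.mem_univ j, by rw [hb]; rfl⟩
    have := code_eq_some P w j hj
    rw [this] at hb
    rw [← Option.some.inj hb]
    exact hzw j hj
  have e1 : P.code z = P.code x := hzc x (Or.inl ex) (by rw [ex]; exact hzx)
  have e2 : P.code z = P.code y := hzc y (Or.inr ey) (by rw [ey]; exact hzy)
  have hcode : P.code y i = some (x i) := by
    rw [← e2, e1]
    exact code_eq_some P x i (by rw [ex]; exact hi)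
  exact hxy (P.self_mem y i (x i) hcode).symm

-- unique small witnesses at the six middle points
lemma uw100 : ∀ W, IsWitness MAJ3 ![true,false,false] W → W.card ≤ 2 → W = ({1,2} : Finset (Fin 3)) := by
  unfold IsWitness; decide
lemma uw010 : ∀ W, IsWitness MAJ3 ![false,true,false] W → W.card ≤ 2 → W = ({0,2} : Finset (Fin 3)) := by
  unfold IsWitness; decide
lemma uw001 : ∀ W, IsWitness MAJ3 ![false,false,true] W → W.card ≤ 2 → W = ({0,1} : Finset (Fin 3)) := by
  unfold IsWitness; decide
lemma uw011 : ∀ W, IsWitness MAJ3 ![false,true,true] W → W.card ≤ 2 → W = ({1,2} : Finset (Fin 3)) := by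
  unfold IsWitness; decide
lemma uw101 : ∀ W, IsWitness MAJ3 ![true,false,true] W → W.card ≤ 2 → W = ({0,2} : Finset (Fin 3)) := by
  unfold IsWitness; decide
lemma uw110 : ∀ W, IsWitness MAJ3 ![true,true,false] W → W.card ≤ 2 → W = ({0,1} : Finset (Fin 3)) := by
  unfold IsWitness; decide

lemma sum_w1 (P : SubcubePartition (Fin 3)) (hdet : P.Determines MAJ3) :
    8 ≤ P.codim ![true,false,false] + P.codim ![false,true,false] + P.codim ![false,false,true] := by
  have h1 := codim_ge P hdet ![true,false,false]
  have h2 := codim_ge P hdet ![false,true,false]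
  have h3 := codim_ge P hdet ![false,false,true]
  have u1 := codim_le P ![true,false,false]
  have u2 := codim_le P ![false,true,false]
  have u3 := codim_le P ![false,false,true]
  have p12 : ¬(P.codim ![true,false,false] ≤ 2 ∧ P.codim ![false,true,false] ≤ 2) := by
    rintro ⟨a, b⟩
    exact pair_contra P hdet _ _ ![false,false,false] _ _ 1 uw100 uw010
      (by decide) (by decide) (by decide) (by decide) a b
  have p13 : ¬(P.codim ![true,false,false] ≤ 2 ∧ P.codim ![false,false,true] ≤ 2) := by
    rintro ⟨a, b⟩
    exact pair_contra P hdet _ _ ![false,false,false] _ _ 2 uw100 uw001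
      (by decide) (by decide) (by decide) (by decide) a b
  have p23 : ¬(P.codim ![false,true,false] ≤ 2 ∧ P.codim ![false,false,true] ≤ 2) := by
    rintro ⟨a, b⟩
    exact pair_contra P hdet _ _ ![false,false,false] _ _ 2 uw010 uw001
      (by decide) (by decide) (by decide) (by decide) a b
  omega

lemma sum_w2 (P : SubcubePartition (Fin 3)) (hdet : P.Determines MAJ3) :
    8 ≤ P.codim ![false,true,true] + P.codim ![true,false,true] + P.codim ![true,true,false] := by
  have h1 := codim_ge P hdet ![false,true,true]
  have h2 := codim_ge P hdet ![true,false,true]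
  have h3 := codim_ge P hdet ![true,true,false]
  have u1 := codim_le P ![false,true,true]
  have u2 := codim_le P ![true,false,true]
  have u3 := codim_le P ![true,true,false]
  have p12 : ¬(P.codim ![false,true,true] ≤ 2 ∧ P.codim ![true,false,true] ≤ 2) := by
    rintro ⟨a, b⟩
    exact pair_contra P hdet _ _ ![true,true,true] _ _ 1 uw011 uw101
      (by decide) (by decide) (by decide) (by decide) a b
  have p13 : ¬(P.codim ![false,true,true] ≤ 2 ∧ P.codim ![true,true,false] ≤ 2) := by
    rintro ⟨a, b⟩
    exact pair_contra P hdet _ _ ![true,true,true] _ _ 2 uw011 uw110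
      (by decide) (by decide) (by decide) (by decide) a b
  have p23 : ¬(P.codim ![true,false,true] ≤ 2 ∧ P.codim ![true,true,false] ≤ 2) := by
    rintro ⟨a, b⟩
    exact pair_contra P hdet _ _ ![true,true,true] _ _ 2 uw101 uw110
      (by decide) (by decide) (by decide) (by decide) a b
  omega

lemma sc_bound (p : ℝ) (hp0 : 0 ≤ p) (hp1 : p ≤ 1)
    (P : SubcubePartition (Fin 3)) (hdet : P.Determines MAJ3) :
    2 + 2 * p * (1 - p) ≤ expec p (fun x => (P.codim x : ℝ)) := by
  have hq : 0 ≤ 1 - p := by linarith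
  unfold expec
  rw [sum_bool3]
  simp only [wt_eval]
  norm_num
  have h000 : (2:ℝ) ≤ P.codim ![false,false,false] := by
    exact_mod_cast codim_ge P hdet _
  have h111 : (2:ℝ) ≤ P.codim ![true,true,true] := by
    exact_mod_cast codim_ge P hdet _
  have hA : (8:ℝ) ≤ P.codim ![true,false,false] + P.codim ![false,true,false]
      + P.codim ![false,false,true] := by exact_mod_cast sum_w1 P hdet
  have hB : (8:ℝ) ≤ P.codim ![false,true,true] + P.codim ![true,false,true]
      + P.codim ![true,true,false] := by exact_mod_cast sum_w2 P hdet
  have t1 : (1-p)^3 * 2 ≤ (1-p)^3 * P.codim ![false,false,false] :=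
    mul_le_mul_of_nonneg_left h000 (by positivity)
  have t2 : p^3 * 2 ≤ p^3 * P.codim ![true,true,true] :=
    mul_le_mul_of_nonneg_left h111 (by positivity)
  have t3 : p*(1-p)^2 * 8 ≤ p*(1-p)^2 * (P.codim ![true,false,false] + P.codim ![false,true,false]
      + P.codim ![false,false,true]) := mul_le_mul_of_nonneg_left hA (by positivity)
  have t4 : p^2*(1-p) * 8 ≤ p^2*(1-p) * (P.codim ![false,true,true] + P.codim ![true,false,true]
      + P.codim ![true,true,false]) := mul_le_mul_of_nonneg_left hB (by positivity)
  nlinarith [t1, t2, t3, t4]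


def T0 : DTree (Fin 3) :=
  .node 0 (.node 1 .leaf (.node 2 .leaf .leaf)) (.node 1 (.node 2 .leaf .leaf) .leaf)

lemma T0_det : T0.Determines MAJ3 := by
  unfold DTree.Determines IsWitness; decide

lemma T0_card : ∀ x : Fin 3 → Bool,
    (T0.path x).card = if x 0 = x 1 then 2 else 3 := by decide

lemma path_stable {ι : Type*} [DecidableEq ι] (T : DTree ι) :
    ∀ x y : ι → Bool, (∀ i ∈ T.path x, y i = x i) → T.path y = T.path x := by
  induction T with
  | leaf => intro x y _; rfl
  | node i t0 t1 ih0 ih1 =>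
    intro x y h
    have hi : y i = x i := h i (by simp [DTree.path])
    rcases hxi : x i with _ | _
    · have h0 : ∀ j ∈ t0.path x, y j = x j := fun j hj => h j (by
        simp only [DTree.path, hxi, if_false, Finset.mem_insert]
        exact Or.inr hj)
      simp [DTree.path, hi, hxi, ih0 x y h0]
    · have h1 : ∀ j ∈ t1.path x, y j = x j := fun j hj => h j (by
        simp only [DTree.path, hxi, if_true, Finset.mem_insert]
        exact Or.inr hj)
      simp [DTree.path, hi, hxi, ih1 x y h1]

def treePartition (T : DTree (Fin 3)) : SubcubePartition (Fin 3) where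
  code := fun x i => if i ∈ T.path x then some (x i) else none
  self_mem := by
    intro x i b h
    by_cases hi : i ∈ T.path x
    · simp [hi] at h; exact h
    · simp [hi] at h
  compat := by
    intro x y h
    have hagree : ∀ i ∈ T.path x, y i = x i := fun i hi => h i (x i) (by simp [hi])
    have hp := path_stable T x y hagree
    funext i
    by_cases hi : i ∈ T.path x
    · simp [hp, hi, hagree i hi]
    · simp [hp, hi]

lemma treePartition_codim (T : DTree (Fin 3)) (x : Fin 3 → Bool) :
    (treePartition T).codim x = (T.path x).card := by
  unfold SubcubePartition.codim treePartition
  congr 1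
  ext i
  by_cases hi : i ∈ T.path x <;> simp [hi]

lemma treePartition_det (T : DTree (Fin 3)) (hdet : T.Determines MAJ3) :
    (treePartition T).Determines MAJ3 := by
  intro x y h
  exact hdet x y (fun i hi => h i (x i) (by simp [treePartition, hi]))

lemma expec_T0 (p : ℝ) :
    expec p (fun x => ((T0.path x).card : ℝ)) = 2 + 2 * p * (1 - p) := by
  unfold expec
  rw [sum_bool3]
  simp only [T0_card, wt_eval]
  norm_num
  ring


lemma wit_val (x : Fin 3 → Bool) : witAt MAJ3 x = 2 := by
  obtain ⟨W, hc, hw⟩ := wit_exists x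
  refine le_antisymm (Nat.sInf_le ⟨W, hc, hw⟩) (le_csInf ⟨2, W, hc, hw⟩ ?_)
  rintro k ⟨V, rfl, hV⟩
  exact wit_lb x V hV


/-- the distributional complexities of `MAJ_3`. -/
theorem maj3_dist_complexities (p : ℝ) (hp0 : 0 ≤ p) (hp1 : p ≤ 1) :
    distSens MAJ3 p = 2 - 2 * p ^ 3 - 2 * (1 - p) ^ 3 ∧
    distBS MAJ3 p = 2 - p ^ 3 - (1 - p) ^ 3 ∧
    distWit MAJ3 p = 2 ∧
    distSC MAJ3 p = 2 + 2 * p * (1 - p) ∧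
    distAlg MAJ3 p = 2 + 2 * p * (1 - p) := by
  refine ⟨?_, ?_, ?_, ?_, ?_⟩
  · unfold distSens expec
    rw [sum_bool3]
    simp only [sens_val, wt_eval]
    norm_num [Matrix.cons_val_two]; ring
  · unfold distBS expec
    rw [sum_bool3]
    simp only [bs_val, wt_eval]
    norm_num [Matrix.cons_val_two]; ring
  · unfold distWit expec
    rw [sum_bool3]
    simp only [wit_val, wt_eval]
    norm_num; ring
  · have hmem : (2 + 2 * p * (1 - p)) ∈ {c | ∃ P : SubcubePartition (Fin 3),
        P.Determines MAJ3 ∧ c = expec p fun x => (P.codim x : ℝ)} := by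
      refine ⟨treePartition T0, treePartition_det T0 T0_det, ?_⟩
      have : (expec p fun x => ((treePartition T0).codim x : ℝ))
          = expec p fun x => ((T0.path x).card : ℝ) := by
        unfold expec
        exact Finset.sum_congr rfl fun x _ => by simp only [treePartition_codim]
      rw [this, expec_T0]
    have hlb : ∀ c ∈ {c | ∃ P : SubcubePartition (Fin 3),
        P.Determines MAJ3 ∧ c = expec p fun x => (P.codim x : ℝ)},
        2 + 2 * p * (1 - p) ≤ c := by
      rintro c ⟨P, hdet, rfl⟩
      exact sc_bound p hp0 hp1 P hdet
    exact le_antisymm (csInf_le ⟨_, hlb⟩ hmem) (le_csInf ⟨_, hmem⟩ hlb)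
  · have hmem : (2 + 2 * p * (1 - p)) ∈ {c | ∃ T : DTree (Fin 3),
        T.Determines MAJ3 ∧ c = expec p fun x => ((T.path x).card : ℝ)} :=
      ⟨T0, T0_det, (expec_T0 p).symm⟩
    have hlb : ∀ c ∈ {c | ∃ T : DTree (Fin 3),
        T.Determines MAJ3 ∧ c = expec p fun x => ((T.path x).card : ℝ)},
        2 + 2 * p * (1 - p) ≤ c := by
      rintro c ⟨T, hdet, rfl⟩
      have : (expec p fun x => ((T.path x).card : ℝ))
          = expec p fun x => (((treePartition T).codim x : ℕ) : ℝ) := by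
        unfold expec
        exact Finset.sum_congr rfl fun x _ => by simp only [treePartition_codim]
      rw [this]
      exact sc_bound p hp0 hp1 _ (treePartition_det T hdet)
    exact le_antisymm (csInf_le ⟨_, hlb⟩ hmem) (le_csInf ⟨_, hmem⟩ hlb)
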